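/- Let I = I_H ⊆ R be the edge ideal of a cointerval d-graph, with generators ordered lexicographically decreasing. For m ∈ G(I) and α ⊆ set(m) define ψ(m;∅) := m and, for α ≠ ∅, ψ(m;α) := Σ_{t ∈ T(α)} (−1)^{ε(α;t)} (x_t·m / c(x_t·m)) · (c(x_t·m); α∖{t}), where ε(α;t) := #{s ∈ α : s < t}. Let d_K(m;α) := Σ_{t ∈ α} (−1)^{ε(α;t)} x_t · (m; α∖{t}) be the Koszul differential, and let d be given by d(m;α) = Σ_{t ∈ α} (−1)^{ε(α;t)+1} x_t (m; α∖{t}) + Σ_{t ∈ T(α)} (−1)^{ε(α;t)} (x_t·m / c(x_t·m)) (c(x_t·m); α∖{t}), with the convention that a symbol (u;β) is 0 if β ⊄ set(u). Then for every m ∈ G(I) and every α ⊆ set(m), ψ(d_K(m;α)) = d(ψ(m;α)); that is, ψ is a chain map lifting the inclusion of colon ideals used in the mapping cone construction. -/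

import Mathlib

open MvPolynomial

/-- The monomial ideal generated by a set of exponent vectors. -/
noncomputable def genIdeal (K : Type*) [Field K] {n : ℕ} (ms : Set (Fin n →₀ ℕ)) :
    Ideal (MvPolynomial (Fin n) K) :=
  Ideal.span ((fun u => MvPolynomial.monomial u (1 : K)) '' ms)

/-- The colon ideal `⟨m_1, …, m_{j-1}⟩ : m_j`. -/
noncomputable def colonJ (K : Type*) [Field K] {n k : ℕ} (m : Fin k → (Fin n →₀ ℕ))
    (j : Fin k) : Ideal (MvPolynomial (Fin n) K) :=
  Submodule.colon (genIdeal K {u | ∃ i : Fin k, i < j ∧ u = m i})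
    (Ideal.span {MvPolynomial.monomial (m j) (1 : K)})

/-- `I` has linear quotients w.r.t. the ordering `m_1,…,m_k` of its generators:
each colon ideal is generated by a subset of the variables. -/
def HasLinearQuotients (K : Type*) [Field K] {n k : ℕ}
    (m : Fin k → (Fin n →₀ ℕ)) : Prop :=
  ∀ j : Fin k, ∃ S : Set (Fin n),
    colonJ K m j = Ideal.span ((fun s => (MvPolynomial.X s : MvPolynomial (Fin n) K)) '' S)

/-- `set(m_j) = {i : x_i ∈ ⟨m_1,…,m_{j-1}⟩ : m_j}`. -/
def mset (K : Type*) [Field K] {n k : ℕ} (m : Fin k → (Fin n →₀ ℕ)) (j : Fin k) :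
    Set (Fin n) :=
  {t | (MvPolynomial.X t : MvPolynomial (Fin n) K) ∈ colonJ K m j}

/-- The `m i` are minimal monomial generators: none divides another. -/
def MinimalGens {n k : ℕ} (m : Fin k → (Fin n →₀ ℕ)) : Prop :=
  ∀ i j : Fin k, m i ≤ m j → i = j

/-- `b` is the decomposition function: for a monomial `u ∈ I`, `b u` is the smallest
index `j` with `u ∈ ⟨m_1,…,m_j⟩`. -/
def IsDecompositionFunction (K : Type*) [Field K] {n k : ℕ}
    (m : Fin k → (Fin n →₀ ℕ)) (b : (Fin n →₀ ℕ) → Fin k) : Prop :=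
  ∀ u : Fin n →₀ ℕ, MvPolynomial.monomial u (1 : K) ∈ genIdeal K (Set.range m) →
    (MvPolynomial.monomial u (1 : K) ∈ genIdeal K {v | ∃ i : Fin k, i ≤ b u ∧ v = m i}) ∧
    (∀ j : Fin k,
      MvPolynomial.monomial u (1 : K) ∈ genIdeal K {v | ∃ i : Fin k, i ≤ j ∧ v = m i} →
      b u ≤ j)

/-- The decomposition function is regular: `set(b(x_t·m)) ⊆ set(m)` for every
generator `m` and every `t ∈ set(m)`. -/
def IsRegularDecomp (K : Type*) [Field K] {n k : ℕ}
    (m : Fin k → (Fin n →₀ ℕ)) (b : (Fin n →₀ ℕ) → Fin k) : Prop :=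
  ∀ j : Fin k, ∀ t ∈ mset K m j,
    mset K m (b (m j + Finsupp.single t 1)) ⊆ mset K m j

/-- The exponent vector of the squarefree monomial `x_{f 0} ⋯ x_{f (d-1)}`. -/
noncomputable def vecOfFin {n d : ℕ} (f : Fin d → Fin n) : Fin n →₀ ℕ :=
  ∑ l : Fin d, Finsupp.single (f l) 1

/-- The exchange property defining cointerval ideals: for every squarefree monomial
`x_{i_1}⋯x_{i_d} ∈ I` (`i_1 < … < i_d`), every `t ≤ d` and all `j_1 < … < j_t` with
`j_s ≤ i_s` and `{j_1,…,j_t} ∩ {i_{t+1},…,i_d} = ∅`, the monomial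
`x_{j_1}⋯x_{j_t}·x_{i_{t+1}}⋯x_{i_d}` also lies in `I`. -/
def CointervalIdeal (K : Type*) [Field K] {n : ℕ} (d : ℕ)
    (I : Ideal (MvPolynomial (Fin n) K)) : Prop :=
  ∀ f : Fin d → Fin n, StrictMono f →
    MvPolynomial.monomial (vecOfFin f) (1 : K) ∈ I →
    ∀ (t : ℕ) (ht : t ≤ d), ∀ g : Fin t → Fin n, StrictMono g →
      (∀ s : Fin t, g s ≤ f (Fin.castLE ht s)) →
      (∀ (s : Fin t) (l : Fin d), t ≤ (l : ℕ) → g s ≠ f l) →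
      MvPolynomial.monomial
          ((∑ s : Fin t, Finsupp.single (g s) 1) +
            ∑ l ∈ Finset.univ.filter (fun l : Fin d => t ≤ (l : ℕ)),
              Finsupp.single (f l) 1) (1 : K) ∈ I

/-- `u >_lex v` for exponent vectors: at the smallest index where they differ, `u` is
larger. -/
def lexGt {n : ℕ} (u v : Fin n →₀ ℕ) : Prop :=
  ∃ i : Fin n, (∀ j : Fin n, j < i → u j = v j) ∧ v i < u i

/-- The generators are listed in lexicographically decreasing order. -/
def LexDec {n k : ℕ} (m : Fin k → (Fin n →₀ ℕ)) : Prop :=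
  ∀ a b : Fin k, a < b → lexGt (m a) (m b)

/-- `u` is the exponent vector of a squarefree monomial of degree `d`. -/
def SqFreeDeg {n : ℕ} (d : ℕ) (u : Fin n →₀ ℕ) : Prop :=
  (∀ a : Fin n, u a ≤ 1) ∧ u.support.card = d

/-- The map `c`: for a generator `m` and `a ∈ set(m)`, `c(x_a·m) = x_a·m / x_{i_k}`
where `i_k` is the smallest element of `supp(m)` with `a ≤ i_k`. -/
noncomputable def cFun {n : ℕ} (u : Fin n →₀ ℕ) (a : Fin n) : Fin n →₀ ℕ :=
  if h : (u.support.filter (fun v => a ≤ v)).Nonempty then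
    u + Finsupp.single a 1 -
      Finsupp.single ((u.support.filter (fun v => a ≤ v)).min' h) 1
  else u + Finsupp.single a 1

open scoped Classical

/-- `ε(α;t) = #{s ∈ α : s < t}`. -/
def eps {n : ℕ} (α : Finset (Fin n)) (t : Fin n) : ℕ := (α.filter (· < t)).card

/-- `a ∈ A_{l+1}` (0-based `l`) for the generator with exponent vector `u`: exactly
`l` elements of `supp(u) = {i_1 < … < i_d}` lie below `a` (so `i_l < a < i_{l+1}`),
`a ∉ supp(u)`, and the replaced monomial `x_{i_1}⋯x_{i_l}·x_a·x_{i_{l+2}}⋯x_{i_d}`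
(which is `c(x_a·u)`) lies in `I`. -/
def inA (K : Type*) [Field K] {n k : ℕ} (m : Fin k → (Fin n →₀ ℕ))
    (u : Fin n →₀ ℕ) (a : Fin n) (l : ℕ) : Prop :=
  (u.support.filter (· < a)).card = l ∧ a ∉ u.support ∧
    MvPolynomial.monomial (cFun u a) (1 : K) ∈ genIdeal K (Set.range m)

/-- `T(α) = {max(α ∩ A_ℓ) : 1 ≤ ℓ ≤ d, α ∩ A_ℓ ≠ ∅}`. -/
noncomputable def TFin (K : Type*) [Field K] {n k : ℕ} (d : ℕ)
    (m : Fin k → (Fin n →₀ ℕ)) (u : Fin n →₀ ℕ) (α : Finset (Fin n)) :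
    Finset (Fin n) :=
  α.filter (fun t => ∃ l : Fin d, inA K m u t l ∧ ∀ s ∈ α, inA K m u s l → s ≤ t)

/-- The big free module containing the complexes: basis `none` for `F_0 = R`, and
basis elements `some (j, β)` for the symbols `(m_j; β)`. -/
abbrev BigFree (K : Type*) [Field K] (n k : ℕ) : Type _ :=
  Option (Fin k × Finset (Fin n)) →₀ MvPolynomial (Fin n) K

/-- The symbol `(u;β)` where `u` is given as an exponent vector: it is the basis
element `(j';β)` when `u = m j'` and `β ⊆ set(u)`, and `0` otherwise. -/
noncomputable def symOfVec (K : Type*) [Field K] {n k : ℕ}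
    (m : Fin k → (Fin n →₀ ℕ)) (v : Fin n →₀ ℕ) (β : Finset (Fin n)) :
    BigFree K n k :=
  ∑ j' : Fin k, if m j' = v ∧ ↑β ⊆ mset K m j' then
    Finsupp.single (some (j', β)) 1 else 0

/-- The symbol `(j;β)`, interpreted as `0` when `β ⊄ set(m_j)`. -/
noncomputable def symIdx (K : Type*) [Field K] {n k : ℕ}
    (m : Fin k → (Fin n →₀ ℕ)) (j : Fin k) (β : Finset (Fin n)) :
    BigFree K n k :=
  if ↑β ⊆ mset K m j then Finsupp.single (some (j, β)) 1 else 0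

/-- The chain map `ψ` on basis symbols: `ψ(m;∅) = m` and, for `α ≠ ∅`,
`ψ(m;α) = Σ_{t ∈ T(α)} (−1)^{ε(α;t)} (x_t·m/c(x_t·m)) (c(x_t·m); α∖t)`. -/
noncomputable def psiB (K : Type*) [Field K] {n k : ℕ} (d : ℕ)
    (m : Fin k → (Fin n →₀ ℕ)) : Option (Fin k × Finset (Fin n)) → BigFree K n k
  | none => 0
  | some (j, α) =>
    if ↑α ⊆ mset K m j then
      if α = ∅ then Finsupp.single none (MvPolynomial.monomial (m j) (1 : K))
      else
        ∑ t ∈ TFin K d m (m j) α,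
          (((-1 : MvPolynomial (Fin n) K) ^ (eps α t)) *
              MvPolynomial.monomial
                ((m j + Finsupp.single t 1) - cFun (m j) t) (1 : K)) •
            symOfVec K m (cFun (m j) t) (α.erase t)
    else 0

/-- The Koszul differential on basis symbols:
`d_K(m;α) = Σ_{t ∈ α} (−1)^{ε(α;t)} x_t (m;α∖t)`. -/
noncomputable def dKB (K : Type*) [Field K] {n k : ℕ}
    (m : Fin k → (Fin n →₀ ℕ)) : Option (Fin k × Finset (Fin n)) → BigFree K n k
  | none => 0
  | some (j, α) =>
    if ↑α ⊆ mset K m j then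
      ∑ t ∈ α,
        (((-1 : MvPolynomial (Fin n) K) ^ (eps α t)) * MvPolynomial.X t) •
          Finsupp.single (some (j, α.erase t)) 1
    else 0

/-- The differential `d` of the resolution on basis symbols: `d(m;∅) = m` and, for
`α ≠ ∅`, `d(m;α) = Σ_{t ∈ α} (−1)^{ε(α;t)+1} x_t (m;α∖t)
+ Σ_{t ∈ T(α)} (−1)^{ε(α;t)} (x_t·m/c(x_t·m)) (c(x_t·m); α∖t)`,
with `(u;β) = 0` when `β ⊄ set(u)`. -/
noncomputable def dFB (K : Type*) [Field K] {n k : ℕ} (d : ℕ)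
    (m : Fin k → (Fin n →₀ ℕ)) : Option (Fin k × Finset (Fin n)) → BigFree K n k
  | none => 0
  | some (j, α) =>
    if ↑α ⊆ mset K m j then
      if α = ∅ then Finsupp.single none (MvPolynomial.monomial (m j) (1 : K))
      else
        (∑ t ∈ α,
          (((-1 : MvPolynomial (Fin n) K) ^ (eps α t + 1)) * MvPolynomial.X t) •
            symIdx K m j (α.erase t))
        + ∑ t ∈ TFin K d m (m j) α,
            (((-1 : MvPolynomial (Fin n) K) ^ (eps α t)) *
                MvPolynomial.monomial
                  ((m j + Finsupp.single t 1) - cFun (m j) t) (1 : K)) •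
              symOfVec K m (cFun (m j) t) (α.erase t)
    else 0

section Chunk1

variable {K : Type*} [Field K] {n k d : ℕ}

lemma lexGt_asymm {u v : Fin n →₀ ℕ} (h : lexGt u v) : ¬ lexGt v u := by
  rintro ⟨i2, h2, l2⟩
  obtain ⟨i1, h1, l1⟩ := h
  rcases lt_trichotomy i1 i2 with hc | hc | hc
  · exact absurd (h2 i1 hc) (by omega)
  · subst hc; omega
  · exact absurd (h1 i2 hc) (by omega)

lemma lexGt_irrefl (u : Fin n →₀ ℕ) : ¬ lexGt u u := by
  rintro ⟨i, _, l⟩; omega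

lemma m_injective {m : Fin k → (Fin n →₀ ℕ)} (hlex : LexDec m) :
    Function.Injective m := by
  intro a b hab
  by_contra hne
  rcases lt_or_gt_of_ne hne with h | h
  · obtain ⟨i, _, l⟩ := hlex a b h; rw [hab] at l; omega
  · obtain ⟨i, _, l⟩ := hlex b a h; rw [hab] at l; omega

lemma mem_genIdeal_iff {w : Fin n →₀ ℕ} {S : Set (Fin n →₀ ℕ)} :
    MvPolynomial.monomial w (1:K) ∈ genIdeal K S ↔ ∃ v ∈ S, v ≤ w := by
  rw [genIdeal, MvPolynomial.mem_ideal_span_monomial_image]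
  constructor
  · intro h
    exact (h w (by simp [MvPolynomial.support_monomial])).imp fun v hv => ⟨hv.1, hv.2⟩
  · intro h xi hxi
    rw [MvPolynomial.support_monomial, if_neg one_ne_zero] at hxi
    simp only [Finset.mem_singleton] at hxi
    subst hxi
    exact h

lemma sqf_apply {u : Fin n →₀ ℕ} (hu : SqFreeDeg d u) (a : Fin n) :
    u a = if a ∈ u.support then 1 else 0 := by
  have := hu.1 a
  by_cases h : a ∈ u.support
  · rw [if_pos h]; have := Finsupp.mem_support_iff.mp h; omega
  · rw [if_neg h]; simpa using Finsupp.notMem_support_iff.mp h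

lemma sqf_ext {u v : Fin n →₀ ℕ} (hu : SqFreeDeg d u) (hv : SqFreeDeg d v)
    (h : u.support = v.support) : u = v := by
  ext a; rw [sqf_apply hu, sqf_apply hv, h]

lemma sqf_le_eq {u v : Fin n →₀ ℕ} (hu : SqFreeDeg d u) (hv : SqFreeDeg d v)
    (h : u ≤ v) : u = v := by
  refine sqf_ext hu hv (Finset.eq_of_subset_of_card_le ?_ ?_)
  · intro a ha
    have := Finsupp.mem_support_iff.mp ha
    have hle := (Finsupp.le_def.mp h) a
    exact Finsupp.mem_support_iff.mpr (by omega)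
  · rw [hu.2, hv.2]

end Chunk1
section Chunk2

variable {K : Type*} [Field K] {n k d : ℕ}

/-- indicator vector of a finset -/
noncomputable def vecOf {n : ℕ} (S : Finset (Fin n)) : Fin n →₀ ℕ :=
  ∑ i ∈ S, Finsupp.single i 1

lemma vecOf_apply {S : Finset (Fin n)} (a : Fin n) :
    vecOf S a = if a ∈ S then 1 else 0 := by
  rw [vecOf, Finsupp.finset_sum_apply]
  simp only [Finsupp.single_apply]
  rw [Finset.sum_ite_eq' S a (fun _ => 1)]

lemma vecOf_support_eq {u : Fin n →₀ ℕ} (hu : SqFreeDeg d u) :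
    vecOf u.support = u := by
  ext a; rw [vecOf_apply, sqf_apply hu]

lemma sum_single_image {β : Type*} {s : Finset β} {F : β → Fin n}
    (hF : Set.InjOn F s) :
    ∑ r ∈ s, Finsupp.single (F r) (1:ℕ) = vecOf (s.image F) := by
  rw [vecOf, Finset.sum_image (fun x hx y hy h => hF hx hy h)]

/-- the minimal support element ≥ t -/
noncomputable def sigf {n : ℕ} (u : Fin n →₀ ℕ) (t : Fin n) : Fin n :=
  if h : (u.support.filter (fun v => t ≤ v)).Nonempty then
    (u.support.filter (fun v => t ≤ v)).min' h else t

lemma sigf_mem {u : Fin n →₀ ℕ} {t : Fin n}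
    (hE : (u.support.filter (fun v => t ≤ v)).Nonempty) :
    sigf u t ∈ u.support ∧ t ≤ sigf u t := by
  rw [sigf, dif_pos hE]
  have := Finset.min'_mem _ hE
  rw [Finset.mem_filter] at this
  exact this

lemma sigf_min {u : Fin n →₀ ℕ} {t : Fin n}
    (hE : (u.support.filter (fun v => t ≤ v)).Nonempty)
    {v : Fin n} (hv : v ∈ u.support) (htv : t ≤ v) : sigf u t ≤ v := by
  rw [sigf, dif_pos hE]
  exact Finset.min'_le _ _ (Finset.mem_filter.mpr ⟨hv, htv⟩)

lemma cFun_def {u : Fin n →₀ ℕ} {t : Fin n}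
    (hE : (u.support.filter (fun v => t ≤ v)).Nonempty) :
    cFun u t = u + Finsupp.single t 1 - Finsupp.single (sigf u t) 1 := by
  rw [cFun, dif_pos hE, sigf, dif_pos hE]

lemma cFun_apply {u : Fin n →₀ ℕ} {t : Fin n} (hu : SqFreeDeg d u)
    (ht : t ∉ u.support)
    (hE : (u.support.filter (fun v => t ≤ v)).Nonempty) (a : Fin n) :
    cFun u t a = if a ∈ insert t (u.support.erase (sigf u t)) then 1 else 0 := by
  obtain ⟨hσm, hσt⟩ := sigf_mem hE
  have hσ1 : u (sigf u t) = 1 := by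
    have := Finsupp.mem_support_iff.mp hσm; have := hu.1 (sigf u t); omega
  have hσt' : sigf u t ≠ t := fun h => ht (h ▸ hσm)
  have hut : u t = 0 := Finsupp.notMem_support_iff.mp ht
  have hua := sqf_apply hu a
  rw [cFun_def hE, Finsupp.tsub_apply, Finsupp.add_apply, Finsupp.single_apply,
    Finsupp.single_apply]
  simp only [Finset.mem_insert, Finset.mem_erase]
  by_cases h1 : a = t <;> by_cases h2 : a = sigf u t <;> by_cases h3 : a ∈ u.support <;>
    simp_all [eq_comm] <;> omega

lemma cFun_support {u : Fin n →₀ ℕ} {t : Fin n} (hu : SqFreeDeg d u)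
    (ht : t ∉ u.support)
    (hE : (u.support.filter (fun v => t ≤ v)).Nonempty) :
    (cFun u t).support = insert t (u.support.erase (sigf u t)) := by
  ext a
  rw [Finsupp.mem_support_iff, cFun_apply hu ht hE]
  by_cases h : a ∈ insert t (u.support.erase (sigf u t)) <;> simp [h]

lemma cFun_sqf {u : Fin n →₀ ℕ} {t : Fin n} (hu : SqFreeDeg d u)
    (ht : t ∉ u.support)
    (hE : (u.support.filter (fun v => t ≤ v)).Nonempty) :
    SqFreeDeg d (cFun u t) := by
  constructor
  · intro a
    rw [cFun_apply hu ht hE]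
    split <;> omega
  · rw [cFun_support hu ht hE, Finset.card_insert_of_notMem
      (fun h => ht (Finset.mem_of_mem_erase h)),
      Finset.card_erase_of_mem (sigf_mem hE).1, hu.2]
    have : 0 < d := by
      rw [← hu.2]
      exact Finset.card_pos.mpr ⟨_, (sigf_mem hE).1⟩
    omega

end Chunk2
section Chunk3

variable {K : Type*} [Field K] {n k d : ℕ}

lemma orderEmb_lt_iff {s : Finset (Fin n)} {D : ℕ} (h : s.card = D) (r : Fin D)
    (x : Fin n) :
    s.orderEmbOfFin h r < x ↔ (r : ℕ) < (s.filter (fun v => v < x)).card := by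
  set f := s.orderEmbOfFin h with hf
  set T := Finset.univ.filter (fun r : Fin D => f r < x) with hT
  have himg : T.image f = s.filter (fun v => v < x) := by
    ext y
    simp only [Finset.mem_image, Finset.mem_filter, hT, Finset.mem_univ, true_and]
    constructor
    · rintro ⟨r, hr, rfl⟩
      exact ⟨Finset.orderEmbOfFin_mem s h r, hr⟩
    · rintro ⟨hy, hyx⟩
      have : y ∈ Set.range f := by rw [hf, Finset.range_orderEmbOfFin]; exact hy
      obtain ⟨r, rfl⟩ := this
      exact ⟨r, hyx, rfl⟩
  have hcard : T.card = (s.filter (fun v => v < x)).card := by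
    rw [← himg, Finset.card_image_of_injective _ f.injective]
  rw [← hcard]
  constructor
  · intro hr
    have hsub : Finset.Iic r ⊆ T := by
      intro b hb
      rw [Finset.mem_Iic] at hb
      exact Finset.mem_filter.mpr ⟨Finset.mem_univ _,
        lt_of_le_of_lt (f.monotone hb) hr⟩
    calc (r:ℕ) < (r:ℕ) + 1 := Nat.lt_succ_self _
    _ = (Finset.Iic r).card := (Fin.card_Iic r).symm
    _ ≤ T.card := Finset.card_le_card hsub
  · intro hr
    by_contra hfr
    have hsub : T ⊆ Finset.Iio r := by
      intro b hb
      rw [Finset.mem_Iio]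
      by_contra hbr
      exact hfr (lt_of_le_of_lt (f.monotone (le_of_not_gt hbr))
        (Finset.mem_filter.mp hb).2)
    have := Finset.card_le_card hsub
    rw [Fin.card_Iio] at this
    omega

lemma vecOfFin_orderEmb {u : Fin n →₀ ℕ} (hu : SqFreeDeg d u) :
    vecOfFin (fun r => u.support.orderEmbOfFin hu.2 r) = u := by
  rw [vecOfFin, sum_single_image
    (Set.InjOn.mono (Set.subset_univ _) (Set.injOn_of_injective
      (u.support.orderEmbOfFin hu.2).injective))]
  have : Finset.univ.image (⇑(u.support.orderEmbOfFin hu.2)) = u.support := by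
    rw [← Finset.coe_inj, Finset.coe_image, Finset.coe_univ, Set.image_univ,
      Finset.range_orderEmbOfFin]
  rw [this, vecOf_support_eq hu]

end Chunk3
section Chunk4

variable {K : Type*} [Field K] {n k d : ℕ}

lemma swap_mem {m : Fin k → (Fin n →₀ ℕ)}
    (hco : CointervalIdeal K d (genIdeal K (Set.range m)))
    {u : Fin n →₀ ℕ} (hu : SqFreeDeg d u)
    (hmem : MvPolynomial.monomial u (1:K) ∈ genIdeal K (Set.range m))
    {t : Fin n} (ht : t ∉ u.support)
    (hE : (u.support.filter (fun v => t ≤ v)).Nonempty) :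
    MvPolynomial.monomial (cFun u t) (1:K) ∈ genIdeal K (Set.range m) := by
  classical
  obtain ⟨hσm, hσt⟩ := sigf_mem hE
  have hmin := fun v hv htv => sigf_min hE (v := v) hv htv
  set σ := sigf u t with hσ
  set l := (u.support.filter (fun v => v < t)).card with hl
  set f : Fin d → Fin n := fun r => u.support.orderEmbOfFin hu.2 r with hf
  have hfmono : StrictMono f := (u.support.orderEmbOfFin hu.2).strictMono
  have hfmem : ∀ r, f r ∈ u.support := fun r => Finset.orderEmbOfFin_mem _ _ _
  have hfrange : ∀ y ∈ u.support, ∃ r, f r = y := by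
    intro y hy
    have : y ∈ Set.range (u.support.orderEmbOfFin hu.2) := by
      rw [Finset.range_orderEmbOfFin]; exact hy
    exact this
  have hflt : ∀ r : Fin d, f r < t ↔ (r:ℕ) < l := fun r => orderEmb_lt_iff hu.2 r t
  have hld : l < d := by
    rw [hl, ← hu.2]
    apply Finset.card_lt_card
    constructor
    · exact Finset.filter_subset _ _
    · intro hsub
      have := Finset.mem_filter.mp (hsub hσm)
      exact absurd this.2 (not_lt.mpr hσt)
  have hl1 : l + 1 ≤ d := hld
  have hfl : f ⟨l, hld⟩ = σ := by
    have h1 : ¬ f ⟨l, hld⟩ < t := by rw [hflt]; simp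
    have h2 : σ ≤ f ⟨l, hld⟩ := hmin _ (hfmem _) (le_of_not_gt h1)
    obtain ⟨r, hr⟩ := hfrange σ hσm
    have h4 : ¬ f r < t := by rw [hr]; exact not_lt.mpr hσt
    rw [hflt] at h4
    have hle : (⟨l, hld⟩ : Fin d) ≤ r := by
      rw [Fin.le_def]; simp only [Fin.val_mk]; omega
    have : f ⟨l, hld⟩ ≤ f r := hfmono.monotone hle
    rw [hr] at this
    exact le_antisymm this h2
  set g : Fin (l+1) → Fin n := fun r =>
    if hr : (r:ℕ) < l then f ⟨r, lt_trans hr hld⟩ else t with hg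
  have hg_lt : ∀ (r : Fin (l+1)) (hr : (r:ℕ) < l), g r = f ⟨r, lt_trans hr hld⟩ :=
    fun r hr => dif_pos hr
  have hg_last : ∀ (r : Fin (l+1)), ¬((r:ℕ) < l) → g r = t := fun r hr => dif_neg hr
  have hgmono : StrictMono g := by
    intro r1 r2 h12
    by_cases h2 : (r2:ℕ) < l
    · have h1 : (r1:ℕ) < l := lt_trans h12 h2
      rw [hg_lt r1 h1, hg_lt r2 h2]
      exact hfmono (by rw [Fin.mk_lt_mk]; exact h12)
    · have h1 : (r1:ℕ) < l := by
        have hr2 := r2.2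
        have : (r1:ℕ) < (r2:ℕ) := h12
        omega
      rw [hg_lt r1 h1, hg_last r2 h2]
      rw [← hflt ⟨r1, lt_trans h1 hld⟩] at h1
      exact h1
  have hgle : ∀ s : Fin (l+1), g s ≤ f (Fin.castLE hl1 s) := by
    intro s
    by_cases hs : (s:ℕ) < l
    · rw [hg_lt s hs]
      apply le_of_eq
      congr 1
    · rw [hg_last s hs]
      have hsl : (Fin.castLE hl1 s : Fin d) = ⟨l, hld⟩ := by
        have := s.2
        apply Fin.ext
        simp only [Fin.coe_castLE]
        omega
      rw [hsl, hfl]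
      exact hσt
  have hgavoid : ∀ (s : Fin (l+1)) (r : Fin d), l + 1 ≤ (r:ℕ) → g s ≠ f r := by
    intro s r hr
    have h1 : g s ≤ t := by
      by_cases hs : (s:ℕ) < l
      · rw [hg_lt s hs]; exact le_of_lt ((hflt _).mpr hs)
      · rw [hg_last s hs]
    have hlt : (⟨l, hld⟩ : Fin d) < r := by
      rw [Fin.lt_def]; simp only [Fin.val_mk]; omega
    have h2 : f ⟨l, hld⟩ < f r := hfmono hlt
    rw [hfl] at h2
    exact ne_of_lt (lt_of_le_of_lt (le_trans h1 hσt) h2)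
  have hkey := hco f hfmono (by rw [show vecOfFin f = u from vecOfFin_orderEmb hu]; exact hmem)
    (l+1) hl1 g hgmono hgle hgavoid
  have hexp : (∑ s : Fin (l+1), Finsupp.single (g s) 1) +
      ∑ r ∈ Finset.univ.filter (fun r : Fin d => l + 1 ≤ (r:ℕ)),
        Finsupp.single (f r) 1 = cFun u t := by
    rw [sum_single_image (Set.injOn_of_injective hgmono.injective),
      sum_single_image (Set.InjOn.mono (Set.subset_univ _)
        (Set.injOn_of_injective hfmono.injective))]
    have himg1 : Finset.univ.image g = insert t (u.support.filter (fun v => v < t)) := by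
      ext y
      simp only [Finset.mem_image, Finset.mem_insert, Finset.mem_filter, Finset.mem_univ,
        true_and]
      constructor
      · rintro ⟨r, rfl⟩
        by_cases hr : (r:ℕ) < l
        · rw [hg_lt r hr]
          exact Or.inr ⟨hfmem _, (hflt _).mpr hr⟩
        · rw [hg_last r hr]; exact Or.inl rfl
      · rintro (rfl | ⟨hy, hyt⟩)
        · exact ⟨⟨l, Nat.lt_succ_self l⟩, hg_last _ (by simp)⟩
        · obtain ⟨r, rfl⟩ := hfrange y hy
          have hr : (r:ℕ) < l := (hflt r).mp hyt
          refine ⟨⟨r, by omega⟩, ?_⟩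
          rw [hg_lt _ (by simpa using hr)]
    have himg2 : (Finset.univ.filter (fun r : Fin d => l + 1 ≤ (r:ℕ))).image f =
        u.support.filter (fun v => σ < v) := by
      ext y
      simp only [Finset.mem_image, Finset.mem_filter, Finset.mem_univ, true_and]
      constructor
      · rintro ⟨r, hr, rfl⟩
        refine ⟨hfmem _, ?_⟩
        rw [← hfl]
        have hlt : (⟨l, hld⟩ : Fin d) < r := by
          rw [Fin.lt_def]
          simp only [Fin.val_mk]
          omega
        exact hfmono hlt
      · rintro ⟨hy, hyσ⟩
        obtain ⟨r, rfl⟩ := hfrange y hy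
        rw [← hfl] at hyσ
        have hlr := (hfmono.lt_iff_lt).mp hyσ
        rw [Fin.lt_def] at hlr
        simp only [Fin.val_mk] at hlr
        refine ⟨r, by omega, rfl⟩
    rw [himg1, himg2]
    ext a
    rw [Finsupp.add_apply, vecOf_apply, vecOf_apply, cFun_apply hu ht hE, ← hσ]
    simp only [Finset.mem_insert, Finset.mem_filter, Finset.mem_erase]
    have hσne : σ ≠ t := fun h => ht (h ▸ hσm)
    by_cases h3 : a ∈ u.support
    · have hat : a ≠ t := fun h => ht (h ▸ h3)
      by_cases h2 : a = σ
      · rw [if_neg (by simp [h2, hσne, not_lt.mpr hσt]), if_neg (by simp [h2]),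
          if_neg (by simp [h2, hσne])]
      · by_cases h4 : a < t
        · have hns : ¬ σ < a := not_lt.mpr (le_trans (le_of_lt h4) hσt)
          rw [if_pos (Or.inr ⟨h3, h4⟩), if_neg (by simp [hns]),
            if_pos (Or.inr ⟨h2, h3⟩)]
        · have hσa : σ < a :=
            lt_of_le_of_ne (hmin a h3 (le_of_not_gt h4)) (fun h => h2 h.symm)
          rw [if_neg (by push_neg; exact ⟨hat, fun _ => le_of_not_gt h4⟩),
            if_pos ⟨h3, hσa⟩, if_pos (Or.inr ⟨h2, h3⟩)]
    · by_cases h1 : a = t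
      · subst h1
        rw [if_pos (Or.inl rfl), if_neg (by simp [h3]), if_pos (Or.inl rfl)]
      · rw [if_neg (by simp [h1, h3]), if_neg (by simp [h3]),
          if_neg (by simp [h1, h3])]
  rw [hexp] at hkey
  exact hkey

end Chunk4
section Chunk5

variable {K : Type*} [Field K] {n k d : ℕ}

lemma gen_of_mem {m : Fin k → (Fin n →₀ ℕ)} (hsf : ∀ j, SqFreeDeg d (m j))
    {w : Fin n →₀ ℕ} (hw : SqFreeDeg d w)
    (hmem : MvPolynomial.monomial w (1:K) ∈ genIdeal K (Set.range m)) :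
    ∃ j', m j' = w := by
  obtain ⟨v, hv, hle⟩ := mem_genIdeal_iff.mp hmem
  obtain ⟨i, rfl⟩ := hv
  exact ⟨i, sqf_le_eq (hsf i) hw hle⟩

lemma mj_mem {m : Fin k → (Fin n →₀ ℕ)} (j : Fin k) :
    MvPolynomial.monomial (m j) (1:K) ∈ genIdeal K (Set.range m) :=
  mem_genIdeal_iff.mpr ⟨m j, ⟨j, rfl⟩, le_refl _⟩

lemma mset_mem_iff {m : Fin k → (Fin n →₀ ℕ)} {j : Fin k} {t : Fin n} :
    t ∈ mset K m j ↔ MvPolynomial.monomial (m j + Finsupp.single t 1) (1:K) ∈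
      genIdeal K {u | ∃ i : Fin k, i < j ∧ u = m i} := by
  have hXg : (MvPolynomial.X t : MvPolynomial (Fin n) K) *
      MvPolynomial.monomial (m j) (1:K) =
      MvPolynomial.monomial (m j + Finsupp.single t 1) (1:K) := by
    rw [MvPolynomial.X, MvPolynomial.monomial_mul, one_mul, add_comm]
  rw [mset, Set.mem_setOf_eq, colonJ, Submodule.mem_colon]
  constructor
  · intro h
    have := h (MvPolynomial.monomial (m j) (1:K)) (Ideal.subset_span rfl)
    rwa [smul_eq_mul, hXg] at this
  · intro h p hp
    rw [SetLike.mem_coe, Ideal.mem_span_singleton] at hp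
    obtain ⟨q, rfl⟩ := hp
    rw [smul_eq_mul, ← mul_assoc, hXg]
    exact Ideal.mul_mem_right q _ h

lemma lexGt_cFun {u : Fin n →₀ ℕ} (hu : SqFreeDeg d u) {t : Fin n}
    (ht : t ∉ u.support)
    (hE : (u.support.filter (fun v => t ≤ v)).Nonempty) :
    lexGt (cFun u t) u := by
  refine ⟨t, ?_, ?_⟩
  · intro a ha
    rw [cFun_apply hu ht hE, sqf_apply hu]
    obtain ⟨hσm, hσt⟩ := sigf_mem hE
    have h1 : a ≠ t := ne_of_lt ha
    have h2 : a ≠ sigf u t := ne_of_lt (lt_of_lt_of_le ha hσt)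
    simp only [Finset.mem_insert, Finset.mem_erase]
    by_cases h3 : a ∈ u.support
    · rw [if_pos (Or.inr ⟨h2, h3⟩), if_pos h3]
    · rw [if_neg (by simp [h1, h3]), if_neg h3]
  · rw [cFun_apply hu ht hE, sqf_apply hu, if_neg ht, if_pos (Finset.mem_insert_self _ _)]
    omega

/-- Lemma A: intrinsic characterization of `mset` for cointerval ideals. -/
lemma mset_iff {m : Fin k → (Fin n →₀ ℕ)} (hsf : ∀ j, SqFreeDeg d (m j))
    (hlex : LexDec m) (hco : CointervalIdeal K d (genIdeal K (Set.range m)))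
    (j : Fin k) (t : Fin n) :
    t ∈ mset K m j ↔ t ∉ (m j).support ∧
      ((m j).support.filter (fun v => t ≤ v)).Nonempty := by
  constructor
  · intro h
    rw [mset_mem_iff, mem_genIdeal_iff] at h
    obtain ⟨v, ⟨i, hij, rfl⟩, hle⟩ := h
    have hine : i ≠ j := ne_of_lt hij
    have hmne : m i ≠ m j := fun h => hine (m_injective hlex h)
    obtain ⟨w, hbel, hltw⟩ := hlex i j hij
    have hsupp : ∀ a, a ∈ (m i).support → a ∈ (m j).support ∨ a = t := by
      intro a ha
      have h1 := Finsupp.mem_support_iff.mp ha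
      have h2 := Finsupp.le_def.mp hle a
      rw [Finsupp.add_apply, Finsupp.single_apply] at h2
      by_cases h3 : a ∈ (m j).support
      · exact Or.inl h3
      · have := Finsupp.notMem_support_iff.mp h3
        right
        by_contra h4
        rw [if_neg (fun h => h4 h.symm)] at h2
        omega
    have hwt : w = t := by
      have hw1 : (m j) w = 0 := by have := (hsf j).1 w; have := (hsf i).1 w; omega
      have hw2 : w ∈ (m i).support := Finsupp.mem_support_iff.mpr (by omega)
      rcases hsupp w hw2 with h | h
      · exact absurd (Finsupp.mem_support_iff.mp h) (by omega)
      · exact h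
    rw [hwt] at hbel hltw
    have htj : t ∉ (m j).support := by
      by_contra htj
      -- then supp m i ⊆ supp m j, hence equal, hence m i = m j
      have hsub : (m i).support ⊆ (m j).support := by
        intro a ha
        rcases hsupp a ha with h | h
        · exact h
        · exact h ▸ htj
      have := Finset.eq_of_subset_of_card_le hsub (by rw [(hsf i).2, (hsf j).2])
      exact hmne (sqf_ext (hsf i) (hsf j) this)
    refine ⟨htj, ?_⟩
    by_contra hne
    rw [Finset.not_nonempty_iff_eq_empty, Finset.filter_eq_empty_iff] at hne
    push_neg at hne
    have hsub2 : (m j).support ⊆ (m i).support := by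
      intro a ha
      have halt : a < t := hne ha
      have := hbel a halt
      exact Finsupp.mem_support_iff.mpr (by
        have := Finsupp.mem_support_iff.mp ha; omega)
    have hti : t ∈ (m i).support := Finsupp.mem_support_iff.mpr (by
      have := (hsf j).1 t
      omega)
    have : (m j).support.card + 1 ≤ (m i).support.card := by
      have : insert t ((m j).support) ⊆ (m i).support := by
        intro a ha
        rcases Finset.mem_insert.mp ha with rfl | ha
        · exact hti
        · exact hsub2 ha
      calc (m j).support.card + 1 = (insert t ((m j).support)).card := by
            rw [Finset.card_insert_of_notMem htj]
      _ ≤ _ := Finset.card_le_card this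
    rw [(hsf i).2, (hsf j).2] at this
    omega
  · rintro ⟨ht, hE⟩
    have hc := swap_mem hco (hsf j) (mj_mem j) ht hE
    obtain ⟨i, hi⟩ := gen_of_mem hsf (cFun_sqf (hsf j) ht hE) hc
    have hlgt : lexGt (m i) (m j) := hi ▸ lexGt_cFun (hsf j) ht hE
    have hij : i < j := by
      rcases lt_trichotomy i j with h | h | h
      · exact h
      · exfalso; subst h; exact lexGt_irrefl _ hlgt
      · exact absurd (hlex j i h) (lexGt_asymm hlgt)
    rw [mset_mem_iff, mem_genIdeal_iff]
    refine ⟨m i, ⟨i, hij, rfl⟩, ?_⟩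
    rw [hi, cFun_def hE]
    exact tsub_le_self
  
end Chunk5
section Chunk6

variable {K : Type*} [Field K] {n k d : ℕ}

/-- number of support elements below `t` ("which A_l contains t") -/
def lcnt {n : ℕ} (u : Fin n →₀ ℕ) (t : Fin n) : ℕ :=
  (u.support.filter (fun v => v < t)).card

lemma lcnt_lt_d {u : Fin n →₀ ℕ} (hu : SqFreeDeg d u) {t : Fin n}
    (hE : (u.support.filter (fun v => t ≤ v)).Nonempty) : lcnt u t < d := by
  rw [lcnt, ← hu.2]
  apply Finset.card_lt_card
  refine ⟨Finset.filter_subset _ _, fun hsub => ?_⟩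
  obtain ⟨hσm, hσt⟩ := sigf_mem hE
  exact absurd (Finset.mem_filter.mp (hsub hσm)).2 (not_lt.mpr hσt)

lemma lcnt_def {u : Fin n →₀ ℕ} {t : Fin n} :
    lcnt u t = (u.support.filter (fun v => v < t)).card := rfl

lemma lcnt_mono {u : Fin n →₀ ℕ} {s t : Fin n} (hst : s ≤ t) :
    lcnt u s ≤ lcnt u t := by
  apply Finset.card_le_card
  intro v hv
  rw [Finset.mem_filter] at hv ⊢
  exact ⟨hv.1, lt_of_lt_of_le hv.2 hst⟩

lemma exists_supp_between {u : Fin n →₀ ℕ} {s t : Fin n} (h : lcnt u s < lcnt u t) :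
    ∃ v ∈ u.support, s ≤ v ∧ v < t := by
  have : ¬ (u.support.filter (fun v => v < t)) ⊆ (u.support.filter (fun v => v < s)) :=
    fun hsub => absurd (Finset.card_le_card hsub) (not_le.mpr h)
  obtain ⟨v, hv1, hv2⟩ := Finset.not_subset.mp this
  rw [Finset.mem_filter] at hv1
  refine ⟨v, hv1.1, ?_, hv1.2⟩
  by_contra hc
  exact hv2 (Finset.mem_filter.mpr ⟨hv1.1, not_le.mp hc⟩)

/-- fact2: position of σ(s) relative to t -/
lemma sigf_lt_iff {u : Fin n →₀ ℕ} {s t : Fin n}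
    (hs : s ∉ u.support) (hEs : (u.support.filter (fun v => s ≤ v)).Nonempty)
    (hne : t ≠ s)
    (hkey : lcnt u t = lcnt u s → t < s) :
    (sigf u s < t ↔ s < t) := by
  obtain ⟨hσm, hσs⟩ := sigf_mem hEs
  constructor
  · intro h
    rcases lt_trichotomy s t with hc | hc | hc
    · exact hc
    · exact absurd rfl (hc ▸ hne.symm)
    · exact absurd (lt_of_le_of_lt hσs h) (not_lt.mpr (le_of_lt hc))
  · intro hst
    have hlt : lcnt u s < lcnt u t := by
      have hmono : lcnt u s ≤ lcnt u t := lcnt_mono (le_of_lt hst)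
      rcases Nat.lt_or_ge (lcnt u s) (lcnt u t) with h | h
      · exact h
      · exact absurd (hkey (le_antisymm (by omega) hmono)) (not_lt.mpr (le_of_lt hst))
    obtain ⟨v, hvm, hsv, hvt⟩ := exists_supp_between hlt
    exact lt_of_le_of_lt (sigf_min hEs hvm hsv) hvt

/-- F: the fiber count is preserved when passing from u to c(s) -/
lemma lcnt_cFun {u : Fin n →₀ ℕ} (hu : SqFreeDeg d u) {s t : Fin n}
    (hs : s ∉ u.support) (hEs : (u.support.filter (fun v => s ≤ v)).Nonempty)
    (hne : t ≠ s)
    (hkey : lcnt u t = lcnt u s → t < s) :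
    lcnt (cFun u s) t = lcnt u t := by
  obtain ⟨hσm, hσs⟩ := sigf_mem hEs
  have hσns : sigf u s ≠ s := fun h => hs (h ▸ hσm)
  rw [lcnt_def, cFun_support hu hs hEs, Finset.filter_insert, Finset.filter_erase]
  by_cases hst : s < t
  · have hσlt : sigf u s < t := (sigf_lt_iff hs hEs hne hkey).mpr hst
    have hσin : sigf u s ∈ u.support.filter (fun v => v < t) :=
      Finset.mem_filter.mpr ⟨hσm, hσlt⟩
    have hsnot : s ∉ (u.support.filter (fun v => v < t)).erase (sigf u s) :=
      fun hc => hs (Finset.mem_filter.mp (Finset.mem_of_mem_erase hc)).1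
    rw [if_pos hst, Finset.card_insert_of_notMem hsnot,
      Finset.card_erase_of_mem hσin, lcnt_def]
    have hpos : 0 < (u.support.filter (fun v => v < t)).card :=
      Finset.card_pos.mpr ⟨_, hσin⟩
    omega
  · have hσnlt : ¬ sigf u s < t := fun hc => hst ((sigf_lt_iff hs hEs hne hkey).mp hc)
    rw [if_neg hst, Finset.erase_eq_of_notMem
      (a := sigf u s) (s := u.support.filter (fun v => v < t))
      (fun hc => hσnlt (Finset.mem_filter.mp hc).2), lcnt_def]

/-- In the same-fiber case, all support elements ≥ t are ≥ s. -/
lemma same_fiber_gap {u : Fin n →₀ ℕ} {s t : Fin n}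
    (hlc : lcnt u t = lcnt u s) (hts : t < s) :
    ∀ v ∈ u.support, t ≤ v → s ≤ v := by
  intro v hv htv
  by_contra hc
  have hfeq : u.support.filter (fun v => v < t) = u.support.filter (fun v => v < s) := by
    apply Finset.eq_of_subset_of_card_le
    · exact Finset.monotone_filter_right _ (fun a _ ha => lt_trans ha hts)
    · exact le_of_eq hlc.symm
  have : v ∈ u.support.filter (fun v => v < s) :=
    Finset.mem_filter.mpr ⟨hv, not_le.mp hc⟩
  rw [← hfeq, Finset.mem_filter] at this
  exact absurd this.2 (not_lt.mpr htv)

lemma sigf_eq_of_same_fiber {u : Fin n →₀ ℕ} {s t : Fin n}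
    (hEs : (u.support.filter (fun v => s ≤ v)).Nonempty)
    (hEt : (u.support.filter (fun v => t ≤ v)).Nonempty)
    (hlc : lcnt u t = lcnt u s) (hts : t < s) :
    sigf u t = sigf u s := by
  obtain ⟨hσsm, hσss⟩ := sigf_mem hEs
  obtain ⟨hσtm, hσtt⟩ := sigf_mem hEt
  exact le_antisymm (sigf_min hEt hσsm (le_trans (le_of_lt hts) hσss))
    (sigf_min hEs hσtm (same_fiber_gap hlc hts _ hσtm hσtt))

end Chunk6
section Chunk7

variable {K : Type*} [Field K] {n k d : ℕ}

lemma erase_erase_comm {A : Finset (Fin n)} {a b : Fin n} :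
    (A.erase a).erase b = (A.erase b).erase a := by
  ext x; simp only [Finset.mem_erase]; tauto

lemma coeff_sub {u : Fin n →₀ ℕ} {t : Fin n} (hu : SqFreeDeg d u)
    (hE : (u.support.filter (fun v => t ≤ v)).Nonempty) :
    u + Finsupp.single t 1 - cFun u t = Finsupp.single (sigf u t) 1 := by
  rw [cFun_def hE]
  apply tsub_tsub_cancel_of_le
  rw [Finsupp.single_le_iff, Finsupp.add_apply]
  have h1 := Finsupp.mem_support_iff.mp (sigf_mem hE).1
  omega

lemma notmem_cs {u : Fin n →₀ ℕ} {s t : Fin n} (hu : SqFreeDeg d u)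
    (hs : s ∉ u.support) (hEs : (u.support.filter (fun v => s ≤ v)).Nonempty)
    (ht : t ∉ u.support) (hne : t ≠ s) : t ∉ (cFun u s).support := by
  rw [cFun_support hu hs hEs, Finset.mem_insert]
  rintro (h | h)
  · exact hne h
  · exact ht (Finset.mem_of_mem_erase h)

/-- same-fiber case: σ of c(s) at t is s itself -/
lemma sigf_cs_same {u : Fin n →₀ ℕ} {s t : Fin n} (hu : SqFreeDeg d u)
    (hs : s ∉ u.support) (hEs : (u.support.filter (fun v => s ≤ v)).Nonempty)
    (hlc : lcnt u t = lcnt u s) (hts : t < s) :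
    ((cFun u s).support.filter (fun v => t ≤ v)).Nonempty ∧ sigf (cFun u s) t = s := by
  have hsmem : s ∈ (cFun u s).support := by
    rw [cFun_support hu hs hEs]; exact Finset.mem_insert_self _ _
  have hE' : ((cFun u s).support.filter (fun v => t ≤ v)).Nonempty :=
    ⟨s, Finset.mem_filter.mpr ⟨hsmem, le_of_lt hts⟩⟩
  refine ⟨hE', le_antisymm (sigf_min hE' hsmem (le_of_lt hts)) ?_⟩
  obtain ⟨hwm, hwt⟩ := sigf_mem hE'
  rw [cFun_support hu hs hEs, Finset.mem_insert] at hwm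
  rcases hwm with h | h
  · exact le_of_eq h.symm
  · exact same_fiber_gap hlc hts _ (Finset.mem_of_mem_erase h) hwt

/-- same-fiber case: c(c(s)) at t equals c(t) -/
lemma cFun_cs_same {u : Fin n →₀ ℕ} {s t : Fin n} (hu : SqFreeDeg d u)
    (hs : s ∉ u.support) (hEs : (u.support.filter (fun v => s ≤ v)).Nonempty)
    (ht : t ∉ u.support) (hEt : (u.support.filter (fun v => t ≤ v)).Nonempty)
    (hlc : lcnt u t = lcnt u s) (hts : t < s) :
    cFun (cFun u s) t = cFun u t := by
  have ht' : t ∉ (cFun u s).support := notmem_cs hu hs hEs ht (ne_of_lt hts)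
  obtain ⟨hE', hsig⟩ := sigf_cs_same hu hs hEs hlc hts
  apply sqf_ext (cFun_sqf (cFun_sqf hu hs hEs) ht' hE') (cFun_sqf hu ht hEt)
  rw [cFun_support (cFun_sqf hu hs hEs) ht' hE', cFun_support hu ht hEt, hsig,
    cFun_support hu hs hEs, Finset.erase_insert (fun hc => hs (Finset.mem_of_mem_erase hc)),
    sigf_eq_of_same_fiber hEs hEt hlc hts]

/-- diff-fiber: σ(t) ≠ σ(s) -/
lemma sigf_ne_diff {u : Fin n →₀ ℕ} {s t : Fin n}
    (hs : s ∉ u.support) (hEs : (u.support.filter (fun v => s ≤ v)).Nonempty)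
    (ht : t ∉ u.support) (hEt : (u.support.filter (fun v => t ≤ v)).Nonempty)
    (hne : t ≠ s) (hlc : lcnt u t ≠ lcnt u s) :
    sigf u t ≠ sigf u s := by
  obtain ⟨hσsm, hσss⟩ := sigf_mem hEs
  obtain ⟨hσtm, hσtt⟩ := sigf_mem hEt
  rcases lt_trichotomy t s with hc | hc | hc
  · have hlt : lcnt u t < lcnt u s :=
      lt_of_le_of_ne (lcnt_mono (le_of_lt hc)) hlc
    obtain ⟨v, hvm, htv, hvs⟩ := exists_supp_between hlt
    exact ne_of_lt (lt_of_le_of_lt (sigf_min hEt hvm htv) (lt_of_lt_of_le hvs hσss))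
  · exact absurd hc hne
  · have hσlt : sigf u s < t :=
      (sigf_lt_iff hs hEs hne (fun h => absurd h hlc)).mpr hc
    exact (ne_of_lt (lt_of_lt_of_le hσlt hσtt)).symm

/-- diff-fiber: σ of c(s) at t is σ(t) -/
lemma sigf_cs_diff {u : Fin n →₀ ℕ} {s t : Fin n} (hu : SqFreeDeg d u)
    (hs : s ∉ u.support) (hEs : (u.support.filter (fun v => s ≤ v)).Nonempty)
    (ht : t ∉ u.support) (hEt : (u.support.filter (fun v => t ≤ v)).Nonempty)
    (hne : t ≠ s) (hlc : lcnt u t ≠ lcnt u s) :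
    ((cFun u s).support.filter (fun v => t ≤ v)).Nonempty ∧
      sigf (cFun u s) t = sigf u t := by
  obtain ⟨hσsm, hσss⟩ := sigf_mem hEs
  obtain ⟨hσtm, hσtt⟩ := sigf_mem hEt
  have hσσ := sigf_ne_diff hs hEs ht hEt hne hlc
  have hσt_mem : sigf u t ∈ (cFun u s).support := by
    rw [cFun_support hu hs hEs]
    exact Finset.mem_insert_of_mem (Finset.mem_erase.mpr ⟨hσσ, hσtm⟩)
  have hE' : ((cFun u s).support.filter (fun v => t ≤ v)).Nonempty :=
    ⟨sigf u t, Finset.mem_filter.mpr ⟨hσt_mem, hσtt⟩⟩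
  refine ⟨hE', le_antisymm (sigf_min hE' hσt_mem hσtt) ?_⟩
  obtain ⟨hwm, hwt⟩ := sigf_mem hE'
  rw [cFun_support hu hs hEs, Finset.mem_insert] at hwm
  rcases hwm with h | h
  · -- sigf (cFun u s) t = s ; then t < s, and σ(t) < s
    rw [h]
    rw [h] at hwt
    have hts : t < s := lt_of_le_of_ne hwt (fun hc => hne hc)
    have hlt : lcnt u t < lcnt u s :=
      lt_of_le_of_ne (lcnt_mono (le_of_lt hts)) hlc
    obtain ⟨v, hvm, htv, hvs⟩ := exists_supp_between hlt
    exact le_of_lt (lt_of_le_of_lt (sigf_min hEt hvm htv) hvs)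
  · exact sigf_min hEt (Finset.mem_of_mem_erase h) hwt

/-- diff-fiber: the double swap is symmetric -/
lemma cFun_cs_diff {u : Fin n →₀ ℕ} {s t : Fin n} (hu : SqFreeDeg d u)
    (hs : s ∉ u.support) (hEs : (u.support.filter (fun v => s ≤ v)).Nonempty)
    (ht : t ∉ u.support) (hEt : (u.support.filter (fun v => t ≤ v)).Nonempty)
    (hne : t ≠ s) (hlc : lcnt u t ≠ lcnt u s) :
    cFun (cFun u s) t = cFun (cFun u t) s := by
  have key : ∀ (s' t' : Fin n), s' ∉ u.support →
      (u.support.filter (fun v => s' ≤ v)).Nonempty → t' ∉ u.support →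
      (u.support.filter (fun v => t' ≤ v)).Nonempty → t' ≠ s' →
      lcnt u t' ≠ lcnt u s' →
      (cFun (cFun u s') t').support =
        insert t' (insert s' ((u.support.erase (sigf u s')).erase (sigf u t'))) := by
    intro s' t' hs' hEs' ht' hEt' hne' hlc'
    have ht'' : t' ∉ (cFun u s').support := notmem_cs hu hs' hEs' ht' hne'
    obtain ⟨hE', hsig⟩ := sigf_cs_diff hu hs' hEs' ht' hEt' hne' hlc'
    rw [cFun_support (cFun_sqf hu hs' hEs') ht'' hE', hsig,
      cFun_support hu hs' hEs',
      Finset.erase_insert_of_ne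
        (fun hc => hs' (by rw [hc]; exact (sigf_mem hEt').1))]
  have h1 := key s t hs hEs ht hEt hne hlc
  have h2 := key t s ht hEt hs hEs (fun h => hne h.symm) (fun h => hlc h.symm)
  have ht' : t ∉ (cFun u s).support := notmem_cs hu hs hEs ht hne
  have hs' : s ∉ (cFun u t).support := notmem_cs hu ht hEt hs (fun h => hne h.symm)
  obtain ⟨hE1, _⟩ := sigf_cs_diff hu hs hEs ht hEt hne hlc
  obtain ⟨hE2, _⟩ := sigf_cs_diff hu ht hEt hs hEs (fun h => hne h.symm)
    (fun h => hlc h.symm)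
  apply sqf_ext (cFun_sqf (cFun_sqf hu hs hEs) ht' hE1)
    (cFun_sqf (cFun_sqf hu ht hEt) hs' hE2)
  rw [h1, h2, Finset.insert_comm, erase_erase_comm]

lemma symOfVec_eq {m : Fin k → (Fin n →₀ ℕ)} (hlex : LexDec m) (j₂ : Fin k)
    (β : Finset (Fin n)) :
    symOfVec K m (m j₂) β = symIdx K m j₂ β := by
  rw [symOfVec, symIdx]
  rw [Finset.sum_eq_single j₂]
  · by_cases h : ↑β ⊆ mset K m j₂
    · rw [if_pos ⟨rfl, h⟩, if_pos h]
    · rw [if_neg (fun hc => h hc.2), if_neg h]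
  · intro j' _ hj'
    rw [if_neg (fun hc => hj' (m_injective hlex hc.1))]
  · intro h
    exact absurd (Finset.mem_univ j₂) h

/-- characterization of TFin as fiber maxima -/
lemma TFin_eq {m : Fin k → (Fin n →₀ ℕ)} (hsf : ∀ j, SqFreeDeg d (m j))
    (hlex : LexDec m) (hco : CointervalIdeal K d (genIdeal K (Set.range m)))
    {j₂ : Fin k} {β : Finset (Fin n)} (hβ : ↑β ⊆ mset K m j₂) :
    TFin K d m (m j₂) β =
      β.filter (fun t => ∀ s ∈ β, lcnt (m j₂) s = lcnt (m j₂) t → s ≤ t) := by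
  ext t
  simp only [TFin, Finset.mem_filter]
  constructor
  · rintro ⟨htβ, l, ⟨hl1, -, -⟩, hmax⟩
    refine ⟨htβ, fun s hsβ hlc => hmax s hsβ ?_⟩
    obtain ⟨hs1, hs2⟩ := (mset_iff hsf hlex hco j₂ s).mp (hβ hsβ)
    exact ⟨by rw [← lcnt_def, hlc, lcnt_def, hl1], hs1,
      swap_mem hco (hsf j₂) (mj_mem j₂) hs1 hs2⟩
  · rintro ⟨htβ, hmax⟩
    obtain ⟨ht1, ht2⟩ := (mset_iff hsf hlex hco j₂ t).mp (hβ htβ)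
    have hld : lcnt (m j₂) t < d := lcnt_lt_d (hsf j₂) ht2
    refine ⟨htβ, ⟨lcnt (m j₂) t, hld⟩,
      ⟨by simp [lcnt_def], ht1, swap_mem hco (hsf j₂) (mj_mem j₂) ht1 ht2⟩, ?_⟩
    rintro s hsβ ⟨h1, -, -⟩
    exact hmax s hsβ (by rw [lcnt_def, h1])

lemma mon_mul {a b : Fin n →₀ ℕ} :
    (MvPolynomial.monomial a (1:K)) * MvPolynomial.monomial b 1 =
      MvPolynomial.monomial (a + b) 1 := by
  rw [MvPolynomial.monomial_mul, one_mul]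

lemma X_mul_mon {t : Fin n} {b : Fin n →₀ ℕ} :
    (MvPolynomial.X t : MvPolynomial (Fin n) K) * MvPolynomial.monomial b 1 =
      MvPolynomial.monomial (b + Finsupp.single t 1) 1 := by
  rw [MvPolynomial.X, mon_mul, add_comm]

end Chunk7
section Chunk8

variable {K : Type*} [Field K] {n k d : ℕ}

lemma dKB_some {m : Fin k → (Fin n →₀ ℕ)} {j : Fin k} {α : Finset (Fin n)} :
    dKB K m (some (j, α)) = if ↑α ⊆ mset K m j then
      ∑ t ∈ α,
        (((-1 : MvPolynomial (Fin n) K) ^ (eps α t)) * MvPolynomial.X t) •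
          Finsupp.single (some (j, α.erase t)) 1
    else 0 := rfl

lemma psiB_some {m : Fin k → (Fin n →₀ ℕ)} {j : Fin k} {α : Finset (Fin n)} :
    psiB K d m (some (j, α)) = if ↑α ⊆ mset K m j then
      if α = ∅ then Finsupp.single none (MvPolynomial.monomial (m j) (1 : K))
      else
        ∑ t ∈ TFin K d m (m j) α,
          (((-1 : MvPolynomial (Fin n) K) ^ (eps α t)) *
              MvPolynomial.monomial
                ((m j + Finsupp.single t 1) - cFun (m j) t) (1 : K)) •
            symOfVec K m (cFun (m j) t) (α.erase t)
    else 0 := rfl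

lemma dFB_some {m : Fin k → (Fin n →₀ ℕ)} {j : Fin k} {α : Finset (Fin n)} :
    dFB K d m (some (j, α)) = if ↑α ⊆ mset K m j then
      if α = ∅ then Finsupp.single none (MvPolynomial.monomial (m j) (1 : K))
      else
        (∑ t ∈ α,
          (((-1 : MvPolynomial (Fin n) K) ^ (eps α t + 1)) * MvPolynomial.X t) •
            symIdx K m j (α.erase t))
        + ∑ t ∈ TFin K d m (m j) α,
            (((-1 : MvPolynomial (Fin n) K) ^ (eps α t)) *
                MvPolynomial.monomial
                  ((m j + Finsupp.single t 1) - cFun (m j) t) (1 : K)) •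
              symOfVec K m (cFun (m j) t) (α.erase t)
    else 0 := rfl

lemma lin_single {F : Option (Fin k × Finset (Fin n)) → BigFree K n k}
    {a : Option (Fin k × Finset (Fin n))} {c : MvPolynomial (Fin n) K} :
    Finsupp.linearCombination (MvPolynomial (Fin n) K) F
      (c • Finsupp.single a 1) = c • F a := by
  rw [map_smul, Finsupp.linearCombination_single, one_smul]

lemma lin_symIdx {m : Fin k → (Fin n →₀ ℕ)} {j₂ : Fin k} {β : Finset (Fin n)} :
    Finsupp.linearCombination (MvPolynomial (Fin n) K) (dFB K d m)
      (symIdx K m j₂ β) = dFB K d m (some (j₂, β)) := by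
  rw [symIdx]
  split_ifs with h
  · rw [Finsupp.linearCombination_single, one_smul]
  · rw [map_zero, dFB_some, if_neg h]

lemma eps_erase {α : Finset (Fin n)} {t s : Fin n} (ht : t ∈ α) (hne : t ≠ s) :
    eps (α.erase t) s + (if t < s then 1 else 0) = eps α s := by
  rw [eps, eps, Finset.filter_erase]
  have hmem : t < s → t ∈ α.filter (· < s) := fun h => Finset.mem_filter.mpr ⟨ht, h⟩
  by_cases h : t < s
  · rw [if_pos h, Finset.card_erase_of_mem (hmem h)]
    have : 0 < (α.filter (· < s)).card := Finset.card_pos.mpr ⟨t, hmem h⟩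
    omega
  · rw [if_neg h, Finset.erase_eq_of_notMem
      (a := t) (s := α.filter (· < s)) (fun hc => h (Finset.mem_filter.mp hc).2)]
    omega

end Chunk8
section Chunk9

variable {K : Type*} [Field K] {n k d : ℕ}

/-- the summand of ψ∘d_K -/
noncomputable def Aterm (K : Type*) [Field K] {n k : ℕ} (m : Fin k → (Fin n →₀ ℕ))
    (g : Fin n → Fin k) (j : Fin k) (α : Finset (Fin n)) (t s : Fin n) :
    BigFree K n k :=
  ((((-1 : MvPolynomial (Fin n) K) ^ (eps α t)) * MvPolynomial.X t) *
      (((-1 : MvPolynomial (Fin n) K) ^ (eps (α.erase t) s)) *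
        MvPolynomial.monomial (Finsupp.single (sigf (m j) s) 1) 1)) •
    symIdx K m (g s) ((α.erase t).erase s)

/-- the Koszul summand of d∘ψ -/
noncomputable def Kterm (K : Type*) [Field K] {n k : ℕ} (m : Fin k → (Fin n →₀ ℕ))
    (g : Fin n → Fin k) (j : Fin k) (α : Finset (Fin n)) (t s : Fin n) :
    BigFree K n k :=
  ((((-1 : MvPolynomial (Fin n) K) ^ (eps α t)) *
      MvPolynomial.monomial (Finsupp.single (sigf (m j) t) 1) 1) *
      (((-1 : MvPolynomial (Fin n) K) ^ (eps (α.erase t) s + 1)) * MvPolynomial.X s)) •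
    symIdx K m (g t) ((α.erase t).erase s)

/-- the second-part summand of d∘ψ -/
noncomputable def Tterm (K : Type*) [Field K] {n k : ℕ} (m : Fin k → (Fin n →₀ ℕ))
    (g : Fin n → Fin k) (j : Fin k) (α : Finset (Fin n)) (t s : Fin n) :
    BigFree K n k :=
  ((((-1 : MvPolynomial (Fin n) K) ^ (eps α t)) *
      MvPolynomial.monomial (Finsupp.single (sigf (m j) t) 1) 1) *
      (((-1 : MvPolynomial (Fin n) K) ^ (eps (α.erase t) s)) *
        MvPolynomial.monomial (Finsupp.single (sigf (m (g t)) s) 1) 1)) •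
    symOfVec K m (cFun (m (g t)) s) ((α.erase t).erase s)

noncomputable def FpsiT (K : Type*) [Field K] {n k : ℕ} (m : Fin k → (Fin n →₀ ℕ))
    (g : Fin n → Fin k) (j : Fin k) (α : Finset (Fin n)) (t s : Fin n) :
    BigFree K n k :=
  if ∀ r ∈ α.erase t, lcnt (m j) r = lcnt (m j) s → r ≤ s then Aterm K m g j α t s
  else 0

noncomputable def FRT (K : Type*) [Field K] {n k : ℕ} (m : Fin k → (Fin n →₀ ℕ))
    (g : Fin n → Fin k) (j : Fin k) (α : Finset (Fin n)) (t s : Fin n) :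
    BigFree K n k :=
  if ∀ r ∈ α, lcnt (m j) r = lcnt (m j) t → r ≤ t then
    Kterm K m g j α t s +
      (if ∀ r ∈ α.erase t, lcnt (m j) r = lcnt (m j) s → r ≤ s then
        Tterm K m g j α t s else 0)
  else 0

variable {m : Fin k → (Fin n →₀ ℕ)} {g : Fin n → Fin k} {j : Fin k}
  {α : Finset (Fin n)}

lemma lhs_eq (hsf : ∀ j, SqFreeDeg d (m j)) (hlex : LexDec m)
    (hco : CointervalIdeal K d (genIdeal K (Set.range m)))
    (hα : ↑α ⊆ mset K m j) (hcard2 : 1 < α.card)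
    (hg : ∀ t ∈ α, m (g t) = cFun (m j) t) :
    Finsupp.linearCombination (MvPolynomial (Fin n) K) (psiB K d m)
        (dKB K m (some (j, α))) =
      ∑ t ∈ α, ∑ s ∈ α.erase t, FpsiT K m g j α t s := by
  have h2 : ∀ t ∈ α, ((m j).support.filter (fun v => t ≤ v)).Nonempty := fun t ht =>
    ((mset_iff hsf hlex hco j t).mp (hα ht)).2
  have hβsub : ∀ t, ↑(α.erase t) ⊆ mset K m j := fun t x hx =>
    hα (Finset.mem_coe.mpr (Finset.mem_of_mem_erase (Finset.mem_coe.mp hx)))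
  have herase_ne : ∀ t ∈ α, α.erase t ≠ ∅ := by
    intro t ht hc
    have h := Finset.card_erase_of_mem ht
    rw [hc, Finset.card_empty] at h
    omega
  rw [dKB_some, if_pos hα, map_sum]
  apply Finset.sum_congr rfl
  intro t ht
  rw [lin_single, psiB_some, if_pos (hβsub t), if_neg (herase_ne t ht),
    TFin_eq hsf hlex hco (hβsub t), Finset.sum_filter, Finset.smul_sum]
  apply Finset.sum_congr rfl
  intro s hs
  have hsα : s ∈ α := Finset.mem_of_mem_erase hs
  by_cases hPs : ∀ r ∈ α.erase t, lcnt (m j) r = lcnt (m j) s → r ≤ s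
  · rw [if_pos hPs, FpsiT, if_pos hPs, Aterm,
      coeff_sub (hsf j) (h2 s hsα), ← hg s hsα, symOfVec_eq hlex, smul_smul]
  · rw [if_neg hPs, FpsiT, if_neg hPs, smul_zero]

lemma rhs_eq (hsf : ∀ j, SqFreeDeg d (m j)) (hlex : LexDec m)
    (hco : CointervalIdeal K d (genIdeal K (Set.range m)))
    (hα : ↑α ⊆ mset K m j) (hcard2 : 1 < α.card)
    (hg : ∀ t ∈ α, m (g t) = cFun (m j) t)
    (hE_sub : ∀ t ∈ α, (∀ r ∈ α, lcnt (m j) r = lcnt (m j) t → r ≤ t) →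
      ↑(α.erase t) ⊆ mset K m (g t)) :
    Finsupp.linearCombination (MvPolynomial (Fin n) K) (dFB K d m)
        (psiB K d m (some (j, α))) =
      ∑ t ∈ α, ∑ s ∈ α.erase t, FRT K m g j α t s := by
  have h1 : ∀ t ∈ α, t ∉ (m j).support := fun t ht =>
    ((mset_iff hsf hlex hco j t).mp (hα ht)).1
  have h2 : ∀ t ∈ α, ((m j).support.filter (fun v => t ≤ v)).Nonempty := fun t ht =>
    ((mset_iff hsf hlex hco j t).mp (hα ht)).2
  have hne : α ≠ ∅ := by
    intro hc; rw [hc, Finset.card_empty] at hcard2; omega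
  have herase_ne : ∀ t ∈ α, α.erase t ≠ ∅ := by
    intro t ht hc
    have h := Finset.card_erase_of_mem ht
    rw [hc, Finset.card_empty] at h
    omega
  rw [psiB_some, if_pos hα, if_neg hne, TFin_eq hsf hlex hco hα, map_sum,
    Finset.sum_filter]
  apply Finset.sum_congr rfl
  intro t ht
  by_cases hPt : ∀ r ∈ α, lcnt (m j) r = lcnt (m j) t → r ≤ t
  · rw [if_pos hPt, coeff_sub (hsf j) (h2 t ht), ← hg t ht, symOfVec_eq hlex,
      map_smul, lin_symIdx, dFB_some, if_pos (hE_sub t ht hPt),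
      if_neg (herase_ne t ht)]
    -- rewrite TFin over m (g t)
    have hT2 : TFin K d m (m (g t)) (α.erase t) =
        (α.erase t).filter (fun s => ∀ r ∈ α.erase t,
          lcnt (m j) r = lcnt (m j) s → r ≤ s) := by
      rw [TFin_eq hsf hlex hco (hE_sub t ht hPt)]
      apply Finset.filter_congr
      intro s hs
      have hlc : ∀ r ∈ α.erase t, lcnt (m (g t)) r = lcnt (m j) r := by
        intro r hr
        obtain ⟨hrne, hrα⟩ := Finset.mem_erase.mp hr
        rw [hg t ht]
        exact lcnt_cFun (hsf j) (h1 t ht) (h2 t ht) hrne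
          (fun hfib => lt_of_le_of_ne (hPt r hrα hfib) hrne)
      constructor
      · intro h r hr hlr
        exact h r hr (by rw [hlc r hr, hlc s hs]; exact hlr)
      · intro h r hr hlr
        exact h r hr (by rw [← hlc r hr, ← hlc s hs]; exact hlr)
    rw [hT2, Finset.sum_filter, smul_add, Finset.smul_sum, Finset.smul_sum,
      ← Finset.sum_add_distrib]
    apply Finset.sum_congr rfl
    intro s hs
    have hsα : s ∈ α := Finset.mem_of_mem_erase hs
    rw [FRT, if_pos hPt, Kterm, smul_smul]
    congr 1
    by_cases hPs : ∀ r ∈ α.erase t, lcnt (m j) r = lcnt (m j) s → r ≤ s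
    · rw [if_pos hPs, if_pos hPs, Tterm, smul_smul]
      -- rewrite the coefficient exponent of the inner monomial
      have hsm : s ∈ mset K m (g t) := hE_sub t ht hPt (Finset.mem_coe.mpr hs)
      obtain ⟨hs1, hs2⟩ := (mset_iff hsf hlex hco (g t) s).mp hsm
      rw [coeff_sub (hsf (g t)) hs2]
    · rw [if_neg hPs, if_neg hPs, smul_zero]
  · rw [if_neg hPt]
    symm
    apply Finset.sum_eq_zero
    intro s hs
    rw [FRT, if_neg hPt]

end Chunk9
section Chunk10

variable {K : Type*} [Field K] {n k d : ℕ}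

lemma sign_flip {α : Finset (Fin n)} {t s : Fin n} (ht : t ∈ α) (hs : s ∈ α)
    (hne : s ≠ t) :
    ((-1 : MvPolynomial (Fin n) K) ^ (eps α t) * (-1) ^ (eps (α.erase t) s)) =
      -((-1 : MvPolynomial (Fin n) K) ^ (eps α s) * (-1) ^ (eps (α.erase s) t)) := by
  have e1 := eps_erase ht (fun h => hne h.symm)
  have e2 := eps_erase hs hne
  rcases lt_or_gt_of_ne hne with h | h
  · -- s < t
    rw [if_neg (asymm h), add_zero] at e1
    rw [if_pos h] at e2
    rw [← e1, ← e2, pow_succ]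
    ring
  · -- t < s
    rw [if_pos h] at e1
    rw [if_neg (asymm h), add_zero] at e2
    rw [← e1, ← e2, pow_succ]
    ring

variable {m : Fin k → (Fin n →₀ ℕ)} {g : Fin n → Fin k} {j : Fin k}
  {α : Finset (Fin n)}

lemma AK_match {t s : Fin n} (ht : t ∈ α) (hs : s ∈ α) (hne : s ≠ t) :
    Aterm K m g j α t s = Kterm K m g j α s t := by
  rw [Aterm, Kterm, erase_erase_comm]
  congr 1
  have hsf := sign_flip (K := K) ht hs hne
  rw [MvPolynomial.X]
  linear_combination (MvPolynomial.monomial (Finsupp.single t 1) (1:K) *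
    MvPolynomial.monomial (Finsupp.single (sigf (m j) s) 1) 1) * hsf

lemma TT_cancel (hsf : ∀ j, SqFreeDeg d (m j)) (hlex : LexDec m)
    (hco : CointervalIdeal K d (genIdeal K (Set.range m)))
    (hα : ↑α ⊆ mset K m j) (hg : ∀ t ∈ α, m (g t) = cFun (m j) t)
    {t s : Fin n} (ht : t ∈ α) (hs : s ∈ α) (hne : s ≠ t)
    (hfib : lcnt (m j) s ≠ lcnt (m j) t) :
    Tterm K m g j α t s + Tterm K m g j α s t = 0 := by
  obtain ⟨h1t, h2t⟩ := (mset_iff hsf hlex hco j t).mp (hα ht)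
  obtain ⟨h1s, h2s⟩ := (mset_iff hsf hlex hco j s).mp (hα hs)
  have hsig1 : sigf (m (g t)) s = sigf (m j) s := by
    rw [hg t ht]
    exact (sigf_cs_diff (hsf j) h1t h2t h1s h2s hne hfib).2
  have hsig2 : sigf (m (g s)) t = sigf (m j) t := by
    rw [hg s hs]
    exact (sigf_cs_diff (hsf j) h1s h2s h1t h2t (fun h => hne h.symm)
      (fun h => hfib h.symm)).2
  have hc12 : cFun (m (g t)) s = cFun (m (g s)) t := by
    rw [hg t ht, hg s hs]
    exact cFun_cs_diff (hsf j) h1t h2t h1s h2s hne hfib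
  rw [Tterm, Tterm, hsig1, hsig2, hc12, erase_erase_comm, ← add_smul]
  have hz : (((-1 : MvPolynomial (Fin n) K) ^ (eps α t) *
        MvPolynomial.monomial (Finsupp.single (sigf (m j) t) 1) 1) *
      ((-1) ^ (eps (α.erase t) s) *
        MvPolynomial.monomial (Finsupp.single (sigf (m j) s) 1) 1)) +
      (((-1) ^ (eps α s) *
        MvPolynomial.monomial (Finsupp.single (sigf (m j) s) 1) 1) *
      ((-1) ^ (eps (α.erase s) t) *
        MvPolynomial.monomial (Finsupp.single (sigf (m j) t) 1) 1)) = 0 := by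
    linear_combination (MvPolynomial.monomial (Finsupp.single (sigf (m j) t) 1) (1:K) *
      MvPolynomial.monomial (Finsupp.single (sigf (m j) s) 1) 1) *
        sign_flip (K := K) ht hs hne
  rw [hz, zero_smul]

lemma AT_match (hsf : ∀ j, SqFreeDeg d (m j)) (hlex : LexDec m)
    (hco : CointervalIdeal K d (genIdeal K (Set.range m)))
    (hα : ↑α ⊆ mset K m j) (hg : ∀ t ∈ α, m (g t) = cFun (m j) t)
    {t s : Fin n} (ht : t ∈ α) (hs : s ∈ α)
    (hfib : lcnt (m j) s = lcnt (m j) t) (hst : s < t) :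
    Aterm K m g j α t s = Tterm K m g j α t s := by
  obtain ⟨h1t, h2t⟩ := (mset_iff hsf hlex hco j t).mp (hα ht)
  obtain ⟨h1s, h2s⟩ := (mset_iff hsf hlex hco j s).mp (hα hs)
  have hsig : sigf (m (g t)) s = t := by
    rw [hg t ht]
    exact (sigf_cs_same (hsf j) h1t h2t hfib hst).2
  have hcf : cFun (m (g t)) s = m (g s) := by
    rw [hg t ht, cFun_cs_same (hsf j) h1t h2t h1s h2s hfib hst]
    exact (hg s hs).symm
  have hσts : sigf (m j) s = sigf (m j) t :=
    sigf_eq_of_same_fiber h2t h2s hfib hst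
  rw [Aterm, Tterm, hsig, hcf, symOfVec_eq hlex, hσts]
  congr 1
  rw [MvPolynomial.X]
  ring

lemma antisym (hsf : ∀ j, SqFreeDeg d (m j)) (hlex : LexDec m)
    (hco : CointervalIdeal K d (genIdeal K (Set.range m)))
    (hα : ↑α ⊆ mset K m j) (hg : ∀ t ∈ α, m (g t) = cFun (m j) t) :
    ∀ t ∈ α, ∀ s ∈ α, s ≠ t →
      (FpsiT K m g j α t s - FRT K m g j α t s) +
        (FpsiT K m g j α s t - FRT K m g j α s t) = 0 := by
  -- core argument for the same-fiber case with s < t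
  have core : ∀ t ∈ α, ∀ s ∈ α, s ≠ t → lcnt (m j) s = lcnt (m j) t → s < t →
      (FpsiT K m g j α t s - FRT K m g j α t s) +
        (FpsiT K m g j α s t - FRT K m g j α s t) = 0 := by
    intro t ht s hs hne hfib hst
    have hPs_false : ¬ (∀ r ∈ α, lcnt (m j) r = lcnt (m j) s → r ≤ s) :=
      fun h => absurd (h t ht hfib.symm) (not_le.mpr hst)
    have hP'st_iff : (∀ r ∈ α.erase s, lcnt (m j) r = lcnt (m j) t → r ≤ t) ↔
        (∀ r ∈ α, lcnt (m j) r = lcnt (m j) t → r ≤ t) := by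
      constructor
      · intro h r hrα hlr
        by_cases hr : r = s
        · exact hr ▸ le_of_lt hst
        · exact h r (Finset.mem_erase.mpr ⟨hr, hrα⟩) hlr
      · intro h r hr hlr
        exact h r (Finset.mem_of_mem_erase hr) hlr
    have hRPt : (∀ r ∈ α.erase t, lcnt (m j) r = lcnt (m j) s → r ≤ s) →
        (∀ r ∈ α, lcnt (m j) r = lcnt (m j) t → r ≤ t) := by
      intro hR r hrα hlr
      by_cases hr : r = t
      · exact le_of_eq hr
      · exact le_of_lt (lt_of_le_of_lt
          (hR r (Finset.mem_erase.mpr ⟨hr, hrα⟩) (hlr.trans hfib.symm)) hst)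
    rw [FpsiT, FpsiT, FRT, FRT, if_neg hPs_false, sub_zero]
    by_cases hPt : ∀ r ∈ α, lcnt (m j) r = lcnt (m j) t → r ≤ t
    · rw [if_pos hPt, if_pos (hP'st_iff.mpr hPt),
        AK_match (K := K) hs ht (fun h => hne h.symm)]
      by_cases hR : ∀ r ∈ α.erase t, lcnt (m j) r = lcnt (m j) s → r ≤ s
      · rw [if_pos hR, if_pos hR, AT_match hsf hlex hco hα hg ht hs hfib hst]
        abel
      · rw [if_neg hR, if_neg hR, add_zero]
        abel
    · rw [if_neg hPt, if_neg (fun h => hPt (hRPt h)),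
        if_neg (fun h => hPt (hP'st_iff.mp h))]
      simp
  intro t ht s hs hne
  by_cases hfib : lcnt (m j) s = lcnt (m j) t
  · rcases lt_or_gt_of_ne hne with hst | hst
    · exact core t ht s hs hne hfib hst
    · rw [add_comm]
      exact core s hs t ht (fun h => hne h.symm) hfib.symm hst
  · -- different fibers
    have hiff1 : (∀ r ∈ α.erase t, lcnt (m j) r = lcnt (m j) s → r ≤ s) ↔
        (∀ r ∈ α, lcnt (m j) r = lcnt (m j) s → r ≤ s) := by
      constructor
      · intro h r hrα hlr
        by_cases hr : r = t
        · exact absurd (hr ▸ hlr).symm hfib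
        · exact h r (Finset.mem_erase.mpr ⟨hr, hrα⟩) hlr
      · intro h r hr hlr
        exact h r (Finset.mem_of_mem_erase hr) hlr
    have hiff2 : (∀ r ∈ α.erase s, lcnt (m j) r = lcnt (m j) t → r ≤ t) ↔
        (∀ r ∈ α, lcnt (m j) r = lcnt (m j) t → r ≤ t) := by
      constructor
      · intro h r hrα hlr
        by_cases hr : r = s
        · exact absurd (hr ▸ hlr) hfib
        · exact h r (Finset.mem_erase.mpr ⟨hr, hrα⟩) hlr
      · intro h r hr hlr
        exact h r (Finset.mem_of_mem_erase hr) hlr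
    rw [FpsiT, FpsiT, FRT, FRT]
    simp only [hiff1, hiff2]
    have h3 : Tterm K m g j α s t = -Tterm K m g j α t s :=
      eq_neg_of_add_eq_zero_right (TT_cancel hsf hlex hco hα hg ht hs hne hfib)
    have h4 := AK_match (K := K) (m := m) (g := g) (j := j) ht hs hne
    have h5 := AK_match (K := K) (m := m) (g := g) (j := j) hs ht (fun h => hne h.symm)
    split_ifs with hPs hPt hPt <;>
      first
        | (rw [h3, h4, h5]; abel)
        | (rw [h4]; abel)
        | (rw [h5]; abel)
        | simp

end Chunk10
/-- for a cointerval ideal, `ψ ∘ d_K = d ∘ ψ` on every symbol `(m;α)`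
with `α ⊆ set(m)`; that is, `ψ` is a chain map lifting the inclusion of colon ideals
used in the mapping cone construction. -/
theorem stmt17 (K : Type*) [Field K] {n k d : ℕ}
    (m : Fin k → (Fin n →₀ ℕ))
    (hsf : ∀ j : Fin k, SqFreeDeg d (m j))
    (hlex : LexDec m)
    (hco : CointervalIdeal K d (genIdeal K (Set.range m)))
    (j : Fin k) (α : Finset (Fin n)) (hα : ↑α ⊆ mset K m j) :
    Finsupp.linearCombination (MvPolynomial (Fin n) K) (psiB K d m)
        (dKB K m (some (j, α))) =
      Finsupp.linearCombination (MvPolynomial (Fin n) K) (dFB K d m)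
        (psiB K d m (some (j, α))) := by
  classical
  by_cases hemp : α = ∅
  · subst hemp
    rw [dKB_some, if_pos hα, psiB_some, if_pos hα, if_pos rfl]
    simp only [Finset.sum_empty, map_zero, Finsupp.linearCombination_single]
    rw [show dFB K d m none = 0 from rfl, smul_zero]
  -- facts about elements of α
  have h1 : ∀ t ∈ α, t ∉ (m j).support := fun t ht =>
    ((mset_iff hsf hlex hco j t).mp (hα ht)).1
  have h2 : ∀ t ∈ α, ((m j).support.filter (fun v => t ≤ v)).Nonempty := fun t ht =>
    ((mset_iff hsf hlex hco j t).mp (hα ht)).2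
  have hgen : ∀ t ∈ α, ∃ i, m i = cFun (m j) t := by
    intro t ht
    exact gen_of_mem hsf (cFun_sqf (hsf j) (h1 t ht) (h2 t ht))
      (swap_mem hco (hsf j) (mj_mem j) (h1 t ht) (h2 t ht))
  have _ : Nonempty (Fin k) := ⟨j⟩
  choose! g hg using hgen
  by_cases hone : α.card = 1
  · -- singleton case
    obtain ⟨t, rfl⟩ := Finset.card_eq_one.mp hone
    have ht : t ∈ ({t} : Finset (Fin n)) := Finset.mem_singleton_self t
    have heps0 : eps {t} t = 0 := by
      rw [eps, Finset.filter_singleton, if_neg (lt_irrefl t), Finset.card_empty]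
    -- LHS
    rw [dKB_some, if_pos hα, Finset.sum_singleton, Finset.erase_singleton,
      lin_single, psiB_some, if_pos (by simp), if_pos rfl, heps0, pow_zero, one_mul]
    -- RHS
    rw [psiB_some, if_pos hα, if_neg (Finset.singleton_ne_empty t),
      TFin_eq hsf hlex hco hα, Finset.filter_singleton,
      if_pos (fun s hs _ => le_of_eq (Finset.mem_singleton.mp hs)),
      Finset.sum_singleton, Finset.erase_singleton, heps0, pow_zero, one_mul,
      coeff_sub (hsf j) (h2 t ht), ← hg t ht, symOfVec_eq hlex, map_smul, lin_symIdx,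
      dFB_some, if_pos (by simp), if_pos rfl]
    rw [Finsupp.smul_single, Finsupp.smul_single, smul_eq_mul, smul_eq_mul,
      X_mul_mon, mon_mul]
    congr 2
    rw [hg t ht, cFun_def (h2 t ht)]
    rw [add_tsub_cancel_of_le]
    rw [Finsupp.single_le_iff, Finsupp.add_apply]
    have := Finsupp.mem_support_iff.mp (sigf_mem (h2 t ht)).1
    omega
  · -- main case: at least two elements
    have hcard2 : 1 < α.card := by
      have h0 : α.card ≠ 0 := fun hc => hemp (Finset.card_eq_zero.mp hc)
      omega
    have hE_sub : ∀ t ∈ α, (∀ r ∈ α, lcnt (m j) r = lcnt (m j) t → r ≤ t) →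
        ↑(α.erase t) ⊆ mset K m (g t) := by
      intro t ht hPt x hx
      obtain ⟨hxne, hxα⟩ := Finset.mem_erase.mp (Finset.mem_coe.mp hx)
      rw [mset_iff hsf hlex hco]
      constructor
      · rw [hg t ht]
        exact notmem_cs (hsf j) (h1 t ht) (h2 t ht) (h1 x hxα) hxne
      · rw [hg t ht]
        by_cases hfib : lcnt (m j) x = lcnt (m j) t
        · exact (sigf_cs_same (hsf j) (h1 t ht) (h2 t ht) hfib
            (lt_of_le_of_ne (hPt x hxα hfib) hxne)).1
        · exact (sigf_cs_diff (hsf j) (h1 t ht) (h2 t ht) (h1 x hxα) (h2 x hxα)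
            hxne hfib).1
    rw [lhs_eq hsf hlex hco hα hcard2 hg, rhs_eq hsf hlex hco hα hcard2 hg hE_sub,
      ← sub_eq_zero, ← Finset.sum_sub_distrib]
    have hstep : ∀ t ∈ α,
        (∑ s ∈ α.erase t, FpsiT K m g j α t s) - ∑ s ∈ α.erase t, FRT K m g j α t s
          = ∑ s ∈ α, if s ≠ t then FpsiT K m g j α t s - FRT K m g j α t s else 0 := by
      intro t _
      rw [← Finset.sum_sub_distrib, ← Finset.filter_ne' α t, Finset.sum_filter]
    rw [Finset.sum_congr rfl hstep, ← Finset.sum_product']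
    apply Finset.sum_involution (fun p _ => (p.2, p.1))
    · intro p hp
      obtain ⟨hp1, hp2⟩ := Finset.mem_product.mp hp
      by_cases hne : p.2 = p.1
      · rw [if_neg (not_not_intro hne), if_neg (not_not_intro hne.symm), add_zero]
      · rw [if_pos hne, if_pos (fun h => hne h.symm)]
        exact antisym hsf hlex hco hα hg p.1 hp1 p.2 hp2 hne
    · intro p hp hf hc
      apply hf
      have h6 : p.2 = p.1 := congrArg Prod.fst hc
      rw [if_neg (not_not_intro h6)]
    · intro p hp
      obtain ⟨hp1, hp2⟩ := Finset.mem_product.mp hp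
      exact Finset.mem_product.mpr ⟨hp2, hp1⟩
    · intro p hp
      rfl
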